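/- Generator identity for TASEP applied to the Vandermonde weight: for n ≥ 2, 1 ≤ ℓ ≤ n-1 and a tuple h = (h₁,...,h_ℓ) of distinct elements of ℤ/nℤ with Δ(h) := ∏_{j<k} |e^{2πi h_k/n} - e^{2πi h_j/n}|, one has Σ_{j : h_j+1 ∉ {h₁,...,h_ℓ}} (Δ(h + e_j) - Δ(h)) = (μ_{n,ℓ} - ℓ + Traffic(h)) · Δ(h), where μ_{n,ℓ} = sin(πℓ/n)/sin(π/n), Traffic(h) := #{j : h_j + 1 ∈ {h₁,...,h_ℓ}}, and h + e_j increments h_j by 1 mod n. -/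

import Mathlib

/-- The Vandermonde-type weight `Δ(g) = ∏_{j<k} |e^{2πi g_k/n} - e^{2πi g_j/n}|` on
`ℓ`-tuples of elements of `ℤ/nℤ`. -/
noncomputable def DeltaWeight (n ℓ : ℕ) (g : Fin ℓ → ZMod n) : ℝ :=
  ∏ p ∈ Finset.univ.filter (fun p : Fin ℓ × Fin ℓ => p.1 < p.2),
    ‖(Complex.exp (2 * Real.pi * Complex.I * ((g p.2).val : ℂ) / n)
      - Complex.exp (2 * Real.pi * Complex.I * ((g p.1).val : ℂ) / n))‖

open Polynomial Finset Real Complex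

section AuxPoly

open Polynomial Finset

variable {F : Type*} [Field F]

lemma coeff_comp_C_mul_X (p : F[X]) (t : F) (i : ℕ) :
    (p.comp (C t * X)).coeff i = t ^ i * p.coeff i := by
  induction p using Polynomial.induction_on' with
  | add p q hp hq => simp [add_comp, hp, hq, mul_add]
  | monomial nn a =>
    rw [monomial_comp, mul_pow, ← C_pow, ← mul_assoc, mul_comm (C a) (C (t ^ nn)),
      mul_assoc, coeff_C_mul, coeff_C_mul, coeff_X_pow, coeff_monomial]
    by_cases hni : nn = i
    · subst hni; simp
    · rw [if_neg hni, if_neg fun hin => hni hin.symm]; ring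

lemma basis_coeff {ι : Type*} [DecidableEq ι] (s : Finset ι) (v : ι → F) (i : ι)
    (hi : i ∈ s) :
    (Lagrange.basis s v i).coeff (s.card - 1) = Lagrange.nodalWeight s v i := by
  have hb : Lagrange.basis s v i
      = C (Lagrange.nodalWeight s v i) * Lagrange.nodal (s.erase i) v := by
    simp_rw [Lagrange.basis, Lagrange.basisDivisor, Lagrange.nodalWeight, prod_mul_distrib,
      map_prod, Lagrange.nodal]
  rw [hb, coeff_C_mul]
  have hm : (Lagrange.nodal (s.erase i) v).Monic := Lagrange.nodal_monic
  have hd : (Lagrange.nodal (s.erase i) v).natDegree = s.card - 1 := by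
    rw [Lagrange.natDegree_nodal, card_erase_of_mem hi]
  rw [← hd, hm.coeff_natDegree, mul_one]

/-- Key Lagrange lemma: sum of `Q(z_j) * nodalWeight j` is the top coefficient. -/
lemma sum_eval_mul_nodalWeight {ι : Type*} [DecidableEq ι] (s : Finset ι) (v : ι → F)
    (hvs : Set.InjOn v s) (Q : F[X]) (hQ : Q.degree < s.card) :
    ∑ i ∈ s, Q.eval (v i) * Lagrange.nodalWeight s v i = Q.coeff (s.card - 1) := by
  have h := Lagrange.eq_interpolate hvs hQ
  have h2 := congrArg (fun p => Polynomial.coeff p (s.card - 1)) h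
  simp only [Lagrange.interpolate_apply, finset_sum_coeff, coeff_C_mul] at h2
  rw [h2]
  exact Finset.sum_congr rfl fun i hi => by rw [basis_coeff s v i hi]

lemma prod_erase_zero' {m : ℕ} (g : Fin (m + 1) → F) :
    ∏ k ∈ univ.erase (0 : Fin (m + 1)), g k = ∏ j : Fin m, g j.succ := by
  rw [← Finset.compl_singleton, ← Fin.image_succ_univ,
    Finset.prod_image (fun x _ y _ h => Fin.succ_inj.mp h)]

lemma prod_erase_succ' {m : ℕ} (i : Fin m) (g : Fin (m + 1) → F) :
    ∏ k ∈ univ.erase i.succ, g k = g 0 * ∏ k ∈ univ.erase i, g k.succ := by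
  have hset : univ.erase i.succ = insert 0 ((univ.erase i).image Fin.succ) := by
    ext k
    induction k using Fin.cases with
    | zero => simp [Ne.symm (Fin.succ_ne_zero i)]
    | succ j => simp [Fin.succ_ne_zero, Fin.succ_inj]
  rw [hset, Finset.prod_insert (by simp [Fin.succ_ne_zero]),
    Finset.prod_image (fun x _ y _ h => Fin.succ_inj.mp h)]

/-- The core algebraic identity:
`Σ_j Π_{k≠j} (t z_j - z_k)/(z_j - z_k) = 1 + t + ... + t^{m-1}`. -/
lemma core_identity (m : ℕ) (hm : 1 ≤ m) (z : Fin m → F)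
    (hz : Function.Injective z) (hz0 : ∀ j, z j ≠ 0) (t : F) (ht : t ≠ 1) :
    ∑ j, ∏ k ∈ univ.erase j, ((t * z j - z k) / (z j - z k))
      = ∑ i ∈ Finset.range m, t ^ i := by
  classical
  have hcard : (univ : Finset (Fin m)).card = m := by simp
  have ht1 : t - 1 ≠ 0 := sub_ne_zero.mpr ht
  set P : F[X] := Lagrange.nodal univ z with hP
  have hPmonic : P.Monic := Lagrange.nodal_monic
  have hPdeg : P.natDegree = m := by rw [hP, Lagrange.natDegree_nodal, hcard]
  have hPm : P.coeff m = 1 := by rw [← hPdeg]; exact hPmonic.coeff_natDegree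
  have hP0 : P.coeff 0 = ∏ k, (0 - z k) := by
    rw [coeff_zero_eq_eval_zero, hP, Lagrange.eval_nodal]
  have hP0ne : P.coeff 0 ≠ 0 := by
    rw [hP0]
    exact Finset.prod_ne_zero_iff.mpr fun k _ => sub_ne_zero.mpr fun e => hz0 k e.symm
  set c : F := (1 - t ^ m) * P.coeff 0 with hc
  set N : F[X] := P.comp (C t * X) - C (t ^ m) * P - C c with hN
  have hNcoeff : ∀ i : ℕ, N.coeff i
      = t ^ i * P.coeff i - t ^ m * P.coeff i - (if i = 0 then c else 0) := by
    intro i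
    rw [hN, coeff_sub, coeff_sub, coeff_comp_C_mul_X, coeff_C_mul, coeff_C]
  have hNtop : ∀ i : ℕ, m ≤ i → N.coeff i = 0 := by
    intro i hi
    rcases eq_or_lt_of_le hi with hi' | hi'
    · rw [hNcoeff, ← hi', hPm, if_neg (by omega)]; ring
    · rw [hNcoeff, Polynomial.coeff_eq_zero_of_natDegree_lt (by rw [hPdeg]; exact hi'),
        if_neg (by omega)]
      ring
  have hN0 : N.coeff 0 = 0 := by rw [hNcoeff, if_pos rfl, hc]; ring
  set Q : F[X] := N.divX with hQ
  have hNQ : N = X * Q := by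
    conv_lhs => rw [← X_mul_divX_add N]
    rw [hN0, map_zero, add_zero]
  have hQcoeff : ∀ i : ℕ, m - 1 ≤ i → Q.coeff i = 0 := by
    intro i hi
    rw [hQ, coeff_divX]
    exact hNtop _ (by omega)
  have hQdeg : Q.degree < ((univ : Finset (Fin m)).card : ℕ) := by
    rw [hcard, Polynomial.degree_lt_iff_coeff_zero]
    intro i hi
    exact hQcoeff i (by exact_mod_cast le_trans (by omega) (by exact_mod_cast hi : m ≤ i))
  -- key sum 1
  have hinjOn : Set.InjOn z (univ : Finset (Fin m)) := fun a _ b _ hab => hz hab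
  have key1 : ∑ j, Q.eval (z j) * Lagrange.nodalWeight univ z j = 0 := by
    rw [sum_eval_mul_nodalWeight univ z hinjOn Q hQdeg, hcard]
    exact hQcoeff _ le_rfl
  -- key sum 2
  have key2 : ∑ j, (z j)⁻¹ * Lagrange.nodalWeight univ z j = -(P.coeff 0)⁻¹ := by
    set v : Fin (m + 1) → F := Fin.cons 0 z with hv
    have hvinj : Set.InjOn v (univ : Finset (Fin (m + 1))) := by
      intro a _ b _ hab
      induction a using Fin.cases with
      | zero =>
        induction b using Fin.cases with
        | zero => rfl
        | succ jb => exact absurd hab.symm (by simpa [hv] using hz0 jb)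
      | succ ja =>
        induction b using Fin.cases with
        | zero => exact absurd hab (by simpa [hv] using hz0 ja)
        | succ jb => simpa [hv] using congrArg Fin.succ (hz (by simpa [hv] using hab))
    have h1 := sum_eval_mul_nodalWeight (univ : Finset (Fin (m + 1))) v hvinj 1
      (by rw [Polynomial.degree_one]; exact_mod_cast WithBot.coe_lt_coe.mpr (by simp))
    simp only [Polynomial.eval_one, one_mul, Polynomial.coeff_one] at h1
    rw [Fin.sum_univ_succ] at h1
    have hw0 : Lagrange.nodalWeight univ v 0 = (P.coeff 0)⁻¹ := by
      rw [Lagrange.nodalWeight, prod_erase_zero', hP0, ← Finset.prod_inv_distrib]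
      exact Finset.prod_congr rfl fun j _ => by simp [hv]
    have hws : ∀ j : Fin m, Lagrange.nodalWeight univ v j.succ
        = (z j)⁻¹ * Lagrange.nodalWeight univ z j := by
      intro j
      rw [Lagrange.nodalWeight, prod_erase_succ', Lagrange.nodalWeight]
      simp [hv, Fin.cons_succ, Fin.cons_zero]
    simp only [hw0, hws] at h1
    have hmm : (if (univ : Finset (Fin (m+1))).card - 1 = 0 then (1:F) else 0) = 0 := by
      rw [if_neg]; simp; omega
    rw [hmm] at h1
    linear_combination h1
  -- now the main computation
  have hterm : ∀ j : Fin m, ∏ k ∈ univ.erase j, ((t * z j - z k) / (z j - z k))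
      = (t - 1)⁻¹ * (Q.eval (z j) * Lagrange.nodalWeight univ z j)
        + (t - 1)⁻¹ * c * ((z j)⁻¹ * Lagrange.nodalWeight univ z j) := by
    intro j
    have hprodnum : (t * z j - z j) * ∏ k ∈ univ.erase j, (t * z j - z k)
        = P.eval (t * z j) := by
      rw [hP, Lagrange.eval_nodal]
      exact Finset.mul_prod_erase univ (fun k => t * z j - z k) (mem_univ j)
    have hPeval : P.eval (t * z j) = z j * Q.eval (z j) + c := by
      have h3 : N.eval (z j) = z j * Q.eval (z j) := by rw [hNQ]; simp [mul_comm]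
      have h4 : N.eval (z j) = P.eval (t * z j) - t ^ m * P.eval (z j) - c := by
        simp [hN, Polynomial.eval_comp]
      have h5 : P.eval (z j) = 0 := Lagrange.eval_nodal_at_node (mem_univ j)
      rw [h5, mul_zero, sub_zero] at h4
      linear_combination h3 - h4
    have hzj := hz0 j
    have htz : t * z j - z j ≠ 0 := by
      intro hcon
      apply ht1
      have : (t - 1) * z j = 0 := by linear_combination hcon
      rcases mul_eq_zero.mp this with h | h
      · exact h
      · exact absurd h hzj
    have hwj : Lagrange.nodalWeight univ z j
        = (∏ k ∈ univ.erase j, (z j - z k))⁻¹ := by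
      rw [Lagrange.nodalWeight, Finset.prod_inv_distrib]
    have hnum : ∏ k ∈ univ.erase j, (t * z j - z k)
        = (z j * Q.eval (z j) + c) / (t * z j - z j) := by
      rw [eq_div_iff htz, mul_comm, hprodnum, hPeval]
    rw [Finset.prod_div_distrib, hnum, hwj, div_div]
    have hden : (∏ k ∈ univ.erase j, (z j - z k)) ≠ 0 :=
      Finset.prod_ne_zero_iff.mpr fun k hk =>
        sub_ne_zero.mpr fun e => (Finset.mem_erase.mp hk).1 ((hz e).symm)
    field_simp
  rw [Finset.sum_congr rfl fun j _ => hterm j, Finset.sum_add_distrib, ← Finset.mul_sum,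
    ← Finset.mul_sum, key1, key2, mul_zero, zero_add, geom_sum_eq ht, hc]
  field_simp
  ring

end AuxPoly

section AuxSplit

open Finset Real Complex

lemma prod_pairs_split {M : Type*} [CommMonoid M] {ℓ : ℕ} (f : Fin ℓ → Fin ℓ → M)
    (hsym : ∀ i k, f i k = f k i) (j : Fin ℓ) :
    ∏ p ∈ Finset.univ.filter (fun p : Fin ℓ × Fin ℓ => p.1 < p.2), f p.1 p.2
      = (∏ k ∈ Finset.univ.erase j, f j k)
        * ∏ p ∈ Finset.univ.filter
            (fun p : Fin ℓ × Fin ℓ => p.1 < p.2 ∧ p.1 ≠ j ∧ p.2 ≠ j), f p.1 p.2 := by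
  classical
  rw [← Finset.prod_filter_mul_prod_filter_not
    (Finset.univ.filter (fun p : Fin ℓ × Fin ℓ => p.1 < p.2))
    (fun p => p.1 = j ∨ p.2 = j)]
  congr 1
  · -- pairs touching j ↔ erase j
    refine Finset.prod_nbij' (fun p => if p.1 = j then p.2 else p.1)
      (fun k => if j < k then (j, k) else (k, j)) ?_ ?_ ?_ ?_ ?_
    · intro p hp
      simp only [Finset.mem_filter, Finset.mem_filter, Finset.mem_univ, true_and] at hp
      obtain ⟨hlt, hj⟩ := hp
      rcases hj with h1 | h2
      · rw [if_pos h1]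
        exact Finset.mem_erase.mpr ⟨by rw [← h1]; exact ne_of_gt hlt, Finset.mem_univ _⟩
      · by_cases h1 : p.1 = j
        · rw [if_pos h1]
          exact Finset.mem_erase.mpr ⟨by rw [← h1]; exact ne_of_gt hlt, Finset.mem_univ _⟩
        · rw [if_neg h1]
          exact Finset.mem_erase.mpr ⟨by rw [← h2]; exact ne_of_lt hlt, Finset.mem_univ _⟩
    · intro k hk
      have hkj : k ≠ j := (Finset.mem_erase.mp hk).1
      by_cases hlt : j < k
      · rw [if_pos hlt]
        simp only [Finset.mem_filter, Finset.mem_univ, true_and]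
        exact ⟨hlt, Or.inl trivial⟩
      · rw [if_neg hlt]
        simp only [Finset.mem_filter, Finset.mem_univ, true_and]
        exact ⟨lt_of_le_of_ne (not_lt.mp hlt) hkj, Or.inr trivial⟩
    · intro p hp
      simp only [Finset.mem_filter, Finset.mem_univ, true_and] at hp
      obtain ⟨hlt, hj⟩ := hp
      by_cases h1 : p.1 = j
      · rw [if_pos h1]
        rw [if_pos (by rw [← h1]; exact hlt)]
        exact Prod.ext h1.symm rfl
      · rw [if_neg h1]
        have h2 : p.2 = j := hj.resolve_left h1
        rw [if_neg (by rw [← h2]; exact not_lt.mpr (le_of_lt hlt))]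
        exact Prod.ext rfl h2.symm
    · intro k hk
      have hkj : k ≠ j := (Finset.mem_erase.mp hk).1
      by_cases hlt : j < k
      · rw [if_pos hlt]
        dsimp only
        rw [if_pos rfl]
      · rw [if_neg hlt]
        dsimp only
        rw [if_neg hkj]
    · intro p hp
      simp only [Finset.mem_filter, Finset.mem_univ, true_and] at hp
      obtain ⟨hlt, hj⟩ := hp
      by_cases h1 : p.1 = j
      · rw [if_pos h1, h1]
      · rw [if_neg h1]
        have h2 : p.2 = j := hj.resolve_left h1
        rw [h2, hsym]
  · apply Finset.prod_congr _ (fun _ _ => rfl)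
    rw [Finset.filter_filter]
    apply Finset.filter_congr
    intro p _
    simp only [not_or, and_assoc]

end AuxSplit

section AuxAnalytic

lemma two_I_sin' (r : ℝ) : 2 * Complex.I * (Real.sin r : ℂ)
    = Complex.exp ((r : ℂ) * Complex.I) - Complex.exp (-((r : ℂ) * Complex.I)) := by
  rw [Complex.ofReal_sin, Complex.sin]
  ring_nf
  rw [Complex.I_sq]
  ring

lemma exp_sub_exp' (x y : ℝ) :
    Complex.exp ((x : ℂ) * Complex.I) - Complex.exp ((y : ℂ) * Complex.I)
      = Complex.exp ((((x + y) / 2 : ℝ) : ℂ) * Complex.I)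
        * (2 * Complex.I * (Real.sin ((x - y) / 2) : ℂ)) := by
  rw [two_I_sin', mul_sub, ← Complex.exp_add, ← Complex.exp_add]
  congr 2 <;> push_cast <;> ring

lemma exp_nat_inj (n : ℕ) (hn : 1 ≤ n) (a b : ℕ) (ha : a < n) (hb : b < n)
    (hab : Complex.exp (2 * Real.pi * Complex.I * a / n)
      = Complex.exp (2 * Real.pi * Complex.I * b / n)) : a = b := by
  rw [Complex.exp_eq_exp_iff_exists_int] at hab
  obtain ⟨k, hk⟩ := hab
  have hn0 : (n : ℂ) ≠ 0 := Nat.cast_ne_zero.mpr (by omega)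
  have h3 : (2 * (Real.pi : ℂ) * Complex.I) * (a : ℂ)
      = (2 * (Real.pi : ℂ) * Complex.I) * ((b : ℂ) + k * n) := by
    field_simp at hk
    linear_combination (2 * (Real.pi : ℂ) * Complex.I) * hk
  have hk2 : (a : ℂ) = (b : ℂ) + k * n := mul_left_cancel₀ (mul_ne_zero (mul_ne_zero
      two_ne_zero (Complex.ofReal_ne_zero.mpr Real.pi_ne_zero)) Complex.I_ne_zero) h3
  have h5 : (a : ℤ) = b + k * n := by exact_mod_cast hk2
  have ha' : (a : ℤ) < n := by exact_mod_cast ha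
  have hb' : (b : ℤ) < n := by exact_mod_cast hb
  have ha0 : (0 : ℤ) ≤ a := Int.ofNat_nonneg a
  have hb0 : (0 : ℤ) ≤ b := Int.ofNat_nonneg b
  have hn' : (1 : ℤ) ≤ n := by exact_mod_cast hn
  have h6 : -(n : ℤ) < k * n := by linarith
  have h7 : k * n < (n : ℤ) := by linarith
  have hk0 : k = 0 := by
    by_contra hkne
    rcases lt_or_gt_of_ne hkne with hneg | hpos
    · have hk1 : k ≤ -1 := by omega
      have : k * n ≤ -1 * n := mul_le_mul_of_nonneg_right hk1 (by linarith)
      linarith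
    · have hk1 : (1 : ℤ) ≤ k := by omega
      have : 1 * (n : ℤ) ≤ k * n := mul_le_mul_of_nonneg_right hk1 (by linarith)
      linarith
  rw [hk0, zero_mul, add_zero] at h5
  exact_mod_cast h5

lemma sin_ratio_facts (n a b : ℕ) (hn : 2 ≤ n) (ha : a < n) (hb : b < n) (hab : a ≠ b) :
    Real.sin (Real.pi * ((a : ℝ) - b) / n) ≠ 0 ∧
      0 ≤ Real.sin (Real.pi * ((a : ℝ) + 1 - b) / n)
        / Real.sin (Real.pi * ((a : ℝ) - b) / n) := by
  have hn0 : (0 : ℝ) < n := by positivity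
  have hpi := Real.pi_pos
  rcases lt_or_gt_of_ne hab with hlt | hgt
  · -- a < b : both sins nonpositive / negative
    have hd1 : (a : ℝ) - b ≤ -1 := by
      have : (a : ℝ) + 1 ≤ b := by exact_mod_cast hlt
      linarith
    have hd2 : -((n : ℝ) - 1) ≤ (a : ℝ) - b := by
      have h1 : (a : ℝ) ≥ 0 := by positivity
      have h2 : (b : ℝ) ≤ n - 1 := by
        have : (b : ℝ) + 1 ≤ n := by exact_mod_cast hb
        linarith
      linarith
    have hden : Real.sin (Real.pi * ((a : ℝ) - b) / n) < 0 := by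
      have h1 : 0 < -(Real.pi * ((a : ℝ) - b) / n) := by
        rw [neg_pos]
        apply div_neg_of_neg_of_pos _ hn0
        nlinarith
      have h2 : -(Real.pi * ((a : ℝ) - b) / n) < Real.pi := by
        rw [neg_lt, lt_div_iff₀ hn0]
        nlinarith
      have := Real.sin_pos_of_pos_of_lt_pi h1 h2
      rw [Real.sin_neg] at this
      linarith
    have hnum : Real.sin (Real.pi * ((a : ℝ) + 1 - b) / n) ≤ 0 := by
      have h1 : 0 ≤ -(Real.pi * ((a : ℝ) + 1 - b) / n) := by
        rw [neg_nonneg]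
        apply div_nonpos_of_nonpos_of_nonneg _ hn0.le
        nlinarith
      have h2 : -(Real.pi * ((a : ℝ) + 1 - b) / n) ≤ Real.pi := by
        rw [neg_le, le_div_iff₀ hn0]
        nlinarith
      have := Real.sin_nonneg_of_nonneg_of_le_pi h1 h2
      rw [Real.sin_neg] at this
      linarith
    exact ⟨ne_of_lt hden, by
      rw [div_nonneg_iff]
      right
      exact ⟨hnum, hden.le⟩⟩
  · -- b < a : both sins nonnegative / positive
    have hd1 : 1 ≤ (a : ℝ) - b := by
      have : (b : ℝ) + 1 ≤ a := by exact_mod_cast hgt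
      linarith
    have hd2 : (a : ℝ) - b ≤ (n : ℝ) - 1 := by
      have h2 : (a : ℝ) ≤ n - 1 := by
        have : (a : ℝ) + 1 ≤ n := by exact_mod_cast ha
        linarith
      have h1 : (b : ℝ) ≥ 0 := by positivity
      linarith
    have hden : 0 < Real.sin (Real.pi * ((a : ℝ) - b) / n) := by
      apply Real.sin_pos_of_pos_of_lt_pi
      · positivity
      · rw [div_lt_iff₀ hn0]; nlinarith
    have hnum : 0 ≤ Real.sin (Real.pi * ((a : ℝ) + 1 - b) / n) := by
      apply Real.sin_nonneg_of_nonneg_of_le_pi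
      · apply div_nonneg _ hn0.le; nlinarith
      · rw [div_le_iff₀ hn0]; nlinarith
    exact ⟨ne_of_gt hden, div_nonneg hnum hden.le⟩

/-- The point on the unit circle attached to `v : ZMod n`. -/
noncomputable def Zc (n : ℕ) (v : ZMod n) : ℂ :=
  Complex.exp (2 * Real.pi * Complex.I * (v.val : ℂ) / n)

/-- The real sine-quotient factor. -/
noncomputable def rquot (n : ℕ) (a b : ZMod n) : ℝ :=
  Real.sin (Real.pi * ((a.val : ℝ) + 1 - b.val) / n)
    / Real.sin (Real.pi * ((a.val : ℝ) - b.val) / n)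

lemma exp_natCast_mod (n m : ℕ) (hn : 1 ≤ n) :
    Complex.exp (2 * Real.pi * Complex.I * ((m % n : ℕ) : ℂ) / n)
      = Complex.exp (2 * Real.pi * Complex.I * (m : ℂ) / n) := by
  have hsplit : (m : ℂ) = ((m % n : ℕ) : ℂ) + (n : ℂ) * ((m / n : ℕ) : ℂ) := by
    exact_mod_cast congrArg (Nat.cast (R := ℂ)) (Nat.mod_add_div m n).symm
  have hn0 : (n : ℂ) ≠ 0 := Nat.cast_ne_zero.mpr (by omega)
  rw [show 2 * Real.pi * Complex.I * (m : ℂ) / n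
      = 2 * Real.pi * Complex.I * ((m % n : ℕ) : ℂ) / n
        + ((m / n : ℕ) : ℤ) * (2 * Real.pi * Complex.I) by
    rw [Int.cast_natCast, hsplit]
    field_simp]
  rw [Complex.exp_add, Complex.exp_int_mul_two_pi_mul_I, mul_one]

lemma Zc_add_one (n : ℕ) [NeZero n] (hn : 2 ≤ n) (a : ZMod n) :
    Zc n (a + 1) = Complex.exp (2 * Real.pi * Complex.I / n) * Zc n a := by
  haveI : Fact (1 < n) := ⟨hn⟩
  rw [Zc, Zc, ZMod.val_add, ZMod.val_one, exp_natCast_mod n _ (by omega), ← Complex.exp_add]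
  congr 1
  have hn0 : (n : ℂ) ≠ 0 := Nat.cast_ne_zero.mpr (by omega)
  rw [Nat.cast_add, Nat.cast_one]
  field_simp
  ring

lemma Zc_ne_zero (n : ℕ) (v : ZMod n) : Zc n v ≠ 0 := Complex.exp_ne_zero _

lemma Zc_inj (n : ℕ) [NeZero n] (hn : 2 ≤ n) : Function.Injective (Zc n) := by
  intro a b hab
  exact ZMod.val_injective n
    (exp_nat_inj n (by omega) a.val b.val a.val_lt b.val_lt hab)



lemma rquot_nonneg (n : ℕ) [NeZero n] (hn : 2 ≤ n) (a b : ZMod n) (hab : a ≠ b) :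
    0 ≤ rquot n a b :=
  (sin_ratio_facts n a.val b.val hn a.val_lt b.val_lt
    (fun h => hab (ZMod.val_injective n h))).2

/-- Key factorization of a single pair factor. -/
lemma pair_key (n : ℕ) [NeZero n] (hn : 2 ≤ n) (a b : ZMod n) (hab : a ≠ b) :
    Zc n (a + 1) - Zc n b
      = Complex.exp (((Real.pi / n : ℝ) : ℂ) * Complex.I) * ((rquot n a b : ℝ) : ℂ)
        * (Zc n a - Zc n b) := by
  have hA : a.val < n := a.val_lt
  have hB : b.val < n := b.val_lt
  have hAB : a.val ≠ b.val := fun h => hab (ZMod.val_injective n h)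
  have hsin := (sin_ratio_facts n a.val b.val hn hA hB hAB).1
  have hn0 : (n : ℝ) ≠ 0 := Nat.cast_ne_zero.mpr (by omega)
  have hn0' : (n : ℂ) ≠ 0 := Nat.cast_ne_zero.mpr (by omega)
  have h1 : Zc n (a + 1) = Complex.exp (((2 * Real.pi * (((a.val : ℝ)) + 1) / n : ℝ) : ℂ) * Complex.I) := by
    rw [Zc_add_one n hn a, Zc, ← Complex.exp_add]
    congr 1
    simp only [Complex.ofReal_div, Complex.ofReal_mul, Complex.ofReal_add, Complex.ofReal_one,
      Complex.ofReal_ofNat, Complex.ofReal_natCast]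
    field_simp
    ring
  have h2 : Zc n b = Complex.exp (((2 * Real.pi * ((b.val : ℝ)) / n : ℝ) : ℂ) * Complex.I) := by
    rw [Zc]; congr 1
    simp only [Complex.ofReal_div, Complex.ofReal_mul, Complex.ofReal_add, Complex.ofReal_one,
      Complex.ofReal_ofNat, Complex.ofReal_natCast]
    ring
  have h3 : Zc n a = Complex.exp (((2 * Real.pi * ((a.val : ℝ)) / n : ℝ) : ℂ) * Complex.I) := by
    rw [Zc]; congr 1
    simp only [Complex.ofReal_div, Complex.ofReal_mul, Complex.ofReal_add, Complex.ofReal_one,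
      Complex.ofReal_ofNat, Complex.ofReal_natCast]
    ring
  rw [h1, h2, h3, exp_sub_exp', exp_sub_exp']
  have e1 : (2 * Real.pi * (((a.val : ℝ)) + 1) / n - 2 * Real.pi * ((b.val : ℝ)) / n) / 2
      = Real.pi * (((a.val : ℝ)) + 1 - ((b.val : ℝ))) / n := by ring
  have e2 : (2 * Real.pi * ((a.val : ℝ)) / n - 2 * Real.pi * ((b.val : ℝ)) / n) / 2 = Real.pi * (((a.val : ℝ)) - ((b.val : ℝ))) / n := by ring
  have e3 : (2 * Real.pi * (((a.val : ℝ)) + 1) / n + 2 * Real.pi * ((b.val : ℝ)) / n) / 2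
      = Real.pi / n + (2 * Real.pi * ((a.val : ℝ)) / n + 2 * Real.pi * ((b.val : ℝ)) / n) / 2 := by ring
  rw [e1, e2, e3, Complex.ofReal_add, add_mul, Complex.exp_add]
  have hsineq : Real.sin (Real.pi * (((a.val : ℝ)) + 1 - ((b.val : ℝ))) / n)
      = rquot n a b * Real.sin (Real.pi * (((a.val : ℝ)) - ((b.val : ℝ))) / n) := (div_mul_cancel₀ _ hsin).symm
  rw [hsineq]
  push_cast
  ring

end AuxAnalytic

section MainAux

lemma DeltaWeight_eq_Zc (n ℓ : ℕ) (g : Fin ℓ → ZMod n) :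
    DeltaWeight n ℓ g = ∏ p ∈ Finset.univ.filter (fun p : Fin ℓ × Fin ℓ => p.1 < p.2),
      ‖Zc n (g p.2) - Zc n (g p.1)‖ := rfl

lemma Delta_update (n ℓ : ℕ) [NeZero n] (hn : 2 ≤ n) (h : Fin ℓ → ZMod n)
    (hinj : Function.Injective h) (j : Fin ℓ) :
    DeltaWeight n ℓ (Function.update h j (h j + 1))
      = (∏ k ∈ Finset.univ.erase j, rquot n (h j) (h k)) * DeltaWeight n ℓ h := by
  classical
  set u : Fin ℓ → ZMod n := Function.update h j (h j + 1) with hu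
  rw [DeltaWeight_eq_Zc, DeltaWeight_eq_Zc,
    prod_pairs_split (fun i k => ‖Zc n (u k) - Zc n (u i)‖)
      (fun i k => norm_sub_rev _ _) j,
    prod_pairs_split (fun i k => ‖Zc n (h k) - Zc n (h i)‖)
      (fun i k => norm_sub_rev _ _) j]
  have hB : ∏ p ∈ Finset.univ.filter
        (fun p : Fin ℓ × Fin ℓ => p.1 < p.2 ∧ p.1 ≠ j ∧ p.2 ≠ j),
        ‖Zc n (u p.2) - Zc n (u p.1)‖
      = ∏ p ∈ Finset.univ.filter
        (fun p : Fin ℓ × Fin ℓ => p.1 < p.2 ∧ p.1 ≠ j ∧ p.2 ≠ j),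
        ‖Zc n (h p.2) - Zc n (h p.1)‖ := by
    apply Finset.prod_congr rfl
    intro p hp
    simp only [Finset.mem_filter, Finset.mem_univ, true_and] at hp
    rw [hu, Function.update_of_ne hp.2.1, Function.update_of_ne hp.2.2]
  have hA : ∏ k ∈ Finset.univ.erase j, ‖Zc n (u k) - Zc n (u j)‖
      = (∏ k ∈ Finset.univ.erase j, rquot n (h j) (h k))
        * ∏ k ∈ Finset.univ.erase j, ‖Zc n (h k) - Zc n (h j)‖ := by
    rw [← Finset.prod_mul_distrib]
    apply Finset.prod_congr rfl
    intro k hk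
    have hkj : k ≠ j := (Finset.mem_erase.mp hk).1
    have hne : h j ≠ h k := fun e => hkj (hinj e.symm)
    rw [hu, Function.update_of_ne hkj, Function.update_self,
      norm_sub_rev, pair_key n hn (h j) (h k) hne,
      norm_mul, norm_mul, Complex.norm_exp_ofReal_mul_I, one_mul,
      Complex.norm_real, Real.norm_eq_abs, _root_.abs_of_nonneg (rquot_nonneg n hn (h j) (h k) hne),
      norm_sub_rev (Zc n (h j))]
  rw [hA, hB]
  ring

lemma Delta_update_zero (n ℓ : ℕ) [NeZero n] (hn : 2 ≤ n) (h : Fin ℓ → ZMod n)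
    (j k : Fin ℓ) (hk : h k = h j + 1) :
    DeltaWeight n ℓ (Function.update h j (h j + 1)) = 0 := by
  classical
  haveI : Fact (1 < n) := ⟨hn⟩
  set u : Fin ℓ → ZMod n := Function.update h j (h j + 1) with hu
  have hkj : k ≠ j := by
    intro e
    rw [e] at hk
    exact one_ne_zero (left_eq_add.mp hk)
  have huk : u k = h j + 1 := by rw [hu, Function.update_of_ne hkj, hk]
  have huj : u j = h j + 1 := by rw [hu, Function.update_self]
  rw [DeltaWeight_eq_Zc]
  rcases lt_or_gt_of_ne hkj with hlt | hgt
  · apply Finset.prod_eq_zero (i := ((k, j) : Fin ℓ × Fin ℓ))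
      (by simp only [Finset.mem_filter, Finset.mem_univ, true_and]; exact hlt)
    simp only [huk, huj, sub_self, norm_zero]
  · apply Finset.prod_eq_zero (i := ((j, k) : Fin ℓ × Fin ℓ))
      (by simp only [Finset.mem_filter, Finset.mem_univ, true_and]; exact hgt)
    simp only [huk, huj, sub_self, norm_zero]

lemma omega_ne_one (n : ℕ) (hn : 2 ≤ n) : Complex.exp (2 * Real.pi * Complex.I / n) ≠ 1 := by
  intro he
  rw [Complex.exp_eq_one_iff] at he
  obtain ⟨k, hk⟩ := he
  have h2 : (2 * (Real.pi : ℂ) * Complex.I) * (1 : ℂ)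
      = (2 * (Real.pi : ℂ) * Complex.I) * (k * n) := by
    have hn0 : (n : ℂ) ≠ 0 := Nat.cast_ne_zero.mpr (by omega)
    field_simp at hk
    linear_combination (2 * (Real.pi : ℂ) * Complex.I) * hk
  have h3 : (1 : ℂ) = k * n := mul_left_cancel₀ (mul_ne_zero (mul_ne_zero
      two_ne_zero (Complex.ofReal_ne_zero.mpr Real.pi_ne_zero)) Complex.I_ne_zero) h2
  have h4 : (1 : ℤ) = k * n := by exact_mod_cast h3
  have hn' : (2 : ℤ) ≤ n := by exact_mod_cast hn
  rcases le_or_gt k 0 with hneg | hpos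
  · have : k * n ≤ 0 := mul_nonpos_of_nonpos_of_nonneg hneg (by linarith)
    linarith
  · have hk1 : (1 : ℤ) ≤ k := hpos
    have : 1 * (n : ℤ) ≤ k * n := mul_le_mul_of_nonneg_right hk1 (by linarith)
    linarith

/-- The sum of the sine-ratio products equals `sin(πℓ/n)/sin(π/n)`. -/
lemma sum_rprod (n ℓ : ℕ) [NeZero n] (hn : 2 ≤ n) (hℓ1 : 1 ≤ ℓ) (h : Fin ℓ → ZMod n)
    (hinj : Function.Injective h) :
    ∑ j : Fin ℓ, ∏ k ∈ Finset.univ.erase j, rquot n (h j) (h k)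
      = Real.sin (Real.pi * ℓ / n) / Real.sin (Real.pi / n) := by
  classical
  have hn0 : (n : ℝ) ≠ 0 := Nat.cast_ne_zero.mpr (by omega)
  have hnR : (1 : ℝ) < n := by exact_mod_cast hn
  set ω : ℂ := Complex.exp (2 * Real.pi * Complex.I / n) with hω
  set z : Fin ℓ → ℂ := fun j => Zc n (h j) with hz
  have hzinj : Function.Injective z := fun a b hab => hinj (Zc_inj n hn hab)
  have hz0 : ∀ j, z j ≠ 0 := fun j => Zc_ne_zero n (h j)
  have hω1 : ω ≠ 1 := omega_ne_one n hn
  have core := core_identity ℓ hℓ1 z hzinj hz0 ω hω1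
  set E1 : ℂ := Complex.exp (((Real.pi / n : ℝ) : ℂ) * Complex.I) with hE1
  set S : ℝ := ∑ j : Fin ℓ, ∏ k ∈ Finset.univ.erase j, rquot n (h j) (h k) with hS
  have hterm : ∀ j : Fin ℓ, ∏ k ∈ Finset.univ.erase j, ((ω * z j - z k) / (z j - z k))
      = E1 ^ (ℓ - 1) * ((∏ k ∈ Finset.univ.erase j, rquot n (h j) (h k) : ℝ) : ℂ) := by
    intro j
    have hstep : ∀ k ∈ Finset.univ.erase j, ((ω * z j - z k) / (z j - z k))
        = E1 * ((rquot n (h j) (h k) : ℝ) : ℂ) := by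
      intro k hk
      have hkj : k ≠ j := (Finset.mem_erase.mp hk).1
      have hne : h j ≠ h k := fun e => hkj (hinj e.symm)
      have hzne : z j - z k ≠ 0 := sub_ne_zero.mpr fun e => hkj (hzinj e).symm
      rw [hz]
      rw [show ω * Zc n (h j) = Zc n (h j + 1) from (Zc_add_one n hn (h j)).symm]
      rw [pair_key n hn (h j) (h k) hne]
      rw [mul_div_assoc]
      rw [div_self hzne, mul_one]
    rw [Finset.prod_congr rfl hstep, Finset.prod_mul_distrib, Finset.prod_const,
      Finset.card_erase_of_mem (Finset.mem_univ j)]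
    simp only [Finset.card_univ, Fintype.card_fin]
    rw [← Complex.ofReal_prod]
  rw [Finset.sum_congr rfl (fun j _ => hterm j), ← Finset.mul_sum, ← Complex.ofReal_sum,
    ← hS, geom_sum_eq hω1] at core
  -- now: E1 ^ (ℓ - 1) * ↑S = (ω ^ ℓ - 1) / (ω - 1)
  have hωne : ω - 1 ≠ 0 := sub_ne_zero.mpr hω1
  have heq : E1 ^ (ℓ - 1) * (S : ℂ) * (ω - 1) = ω ^ ℓ - 1 := by
    rw [core, div_mul_cancel₀ _ hωne]
  have hωform : ω = Complex.exp (((2 * Real.pi / n : ℝ) : ℂ) * Complex.I) := by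
    rw [hω]; congr 1; push_cast; ring
  have hωpow : ω ^ ℓ = Complex.exp (((2 * Real.pi * ℓ / n : ℝ) : ℂ) * Complex.I) := by
    rw [hωform, ← Complex.exp_nat_mul]
    congr 1; push_cast; ring
  have hωℓ1 : ω ^ ℓ - 1 = Complex.exp (((Real.pi * ℓ / n : ℝ) : ℂ) * Complex.I)
      * (2 * Complex.I * (Real.sin (Real.pi * ℓ / n) : ℂ)) := by
    rw [hωpow, show (1 : ℂ) = Complex.exp (((0 : ℝ) : ℂ) * Complex.I) by simp,
      exp_sub_exp']
    rw [show (2 * Real.pi * ℓ / n + 0) / 2 = Real.pi * ℓ / n by ring,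
      show (2 * Real.pi * ℓ / n - 0) / 2 = Real.pi * ℓ / n by ring]
  have hωm1 : ω - 1 = E1 * (2 * Complex.I * (Real.sin (Real.pi / n) : ℂ)) := by
    rw [hωform, show (1 : ℂ) = Complex.exp (((0 : ℝ) : ℂ) * Complex.I) by simp,
      exp_sub_exp', hE1]
    rw [show (2 * Real.pi / n + 0) / 2 = Real.pi / n by ring,
      show (2 * Real.pi / n - 0) / 2 = Real.pi / n by ring]
  have hE1pow : E1 ^ (ℓ - 1) * E1 = Complex.exp (((Real.pi * ℓ / n : ℝ) : ℂ) * Complex.I) := by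
    rw [hE1, ← Complex.exp_nat_mul, ← Complex.exp_add]
    congr 1
    have hc : ((ℓ - 1 : ℕ) : ℂ) = (ℓ : ℂ) - 1 := by
      push_cast [Nat.cast_sub hℓ1]; ring
    rw [hc]
    push_cast
    field_simp
    ring
  have hkey : (S : ℂ) * (Real.sin (Real.pi / n) : ℂ) = (Real.sin (Real.pi * ℓ / n) : ℂ) := by
    have hne2 : Complex.exp (((Real.pi * ℓ / n : ℝ) : ℂ) * Complex.I) * (2 * Complex.I) ≠ 0 :=
      mul_ne_zero (Complex.exp_ne_zero _) (mul_ne_zero two_ne_zero Complex.I_ne_zero)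
    apply mul_left_cancel₀ hne2
    rw [hωℓ1, hωm1] at heq
    calc Complex.exp (((Real.pi * ℓ / n : ℝ) : ℂ) * Complex.I) * (2 * Complex.I)
        * ((S : ℂ) * (Real.sin (Real.pi / n) : ℂ))
        = E1 ^ (ℓ - 1) * E1 * (2 * Complex.I) * ((S : ℂ) * (Real.sin (Real.pi / n) : ℂ)) := by
          rw [hE1pow]
      _ = E1 ^ (ℓ - 1) * (S : ℂ) * (E1 * (2 * Complex.I * (Real.sin (Real.pi / n) : ℂ))) := by
          ring
      _ = Complex.exp (((Real.pi * ℓ / n : ℝ) : ℂ) * Complex.I)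
          * (2 * Complex.I * (Real.sin (Real.pi * ℓ / n) : ℂ)) := heq
      _ = Complex.exp (((Real.pi * ℓ / n : ℝ) : ℂ) * Complex.I) * (2 * Complex.I)
          * (Real.sin (Real.pi * ℓ / n) : ℂ) := by ring
  have hkeyR : S * Real.sin (Real.pi / n) = Real.sin (Real.pi * ℓ / n) := by
    exact_mod_cast hkey
  have hsinne : Real.sin (Real.pi / n) ≠ 0 := by
    apply ne_of_gt
    apply Real.sin_pos_of_pos_of_lt_pi
    · positivity
    · exact div_lt_self Real.pi_pos hnR
  rw [eq_div_iff hsinne]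
  exact hkeyR

end MainAux

/-- Generator identity for TASEP applied to the Vandermonde weight:
`Σ_{j : h_j+1 ∉ h} (Δ(h+e_j) - Δ(h)) = (μ_{n,ℓ} - ℓ + Traffic(h)) Δ(h)`. -/
theorem tasep_generator_vandermonde (n ℓ : ℕ) [NeZero n] (hn : 2 ≤ n) (hℓ1 : 1 ≤ ℓ)
    (hℓn : ℓ ≤ n - 1) (h : Fin ℓ → ZMod n) (hinj : Function.Injective h) :
    ∑ j ∈ Finset.univ.filter (fun j : Fin ℓ => ¬ ∃ k, h k = h j + 1),
        (DeltaWeight n ℓ (Function.update h j (h j + 1)) - DeltaWeight n ℓ h)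
    = (Real.sin (Real.pi * ℓ / n) / Real.sin (Real.pi / n) - (ℓ : ℝ) +
        ((Finset.univ.filter (fun j : Fin ℓ => ∃ k, h k = h j + 1)).card : ℝ)) *
        DeltaWeight n ℓ h := by
  classical
  set Δ : ℝ := DeltaWeight n ℓ h with hΔ
  set μ : ℝ := Real.sin (Real.pi * ℓ / n) / Real.sin (Real.pi / n) with hμ
  set p : Fin ℓ → Prop := fun j => ∃ k, h k = h j + 1 with hp
  set T : ℕ := (Finset.univ.filter p).card with hT
  have hTle : T ≤ ℓ := le_trans (Finset.card_filter_le _ _) (by simp)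
  -- the sum over all j of the updated weights
  have hall : ∑ j : Fin ℓ, DeltaWeight n ℓ (Function.update h j (h j + 1)) = μ * Δ := by
    have : ∀ j : Fin ℓ, DeltaWeight n ℓ (Function.update h j (h j + 1))
        = (∏ k ∈ Finset.univ.erase j, rquot n (h j) (h k)) * Δ :=
      fun j => Delta_update n ℓ hn h hinj j
    rw [Finset.sum_congr rfl (fun j _ => this j), ← Finset.sum_mul,
      sum_rprod n ℓ hn hℓ1 h hinj]
  -- split the full sum
  have hsplit := Finset.sum_filter_add_sum_filter_not Finset.univ p
    (fun j => DeltaWeight n ℓ (Function.update h j (h j + 1)))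
  have hzero : ∑ j ∈ Finset.univ.filter p,
      DeltaWeight n ℓ (Function.update h j (h j + 1)) = 0 := by
    apply Finset.sum_eq_zero
    intro j hj
    obtain ⟨k, hk⟩ := (Finset.mem_filter.mp hj).2
    exact Delta_update_zero n ℓ hn h j k hk
  have hnotsum : ∑ j ∈ Finset.univ.filter (fun j => ¬ p j),
      DeltaWeight n ℓ (Function.update h j (h j + 1)) = μ * Δ := by
    rw [← hall, ← hsplit, hzero, zero_add]
  have hcard : (Finset.univ.filter (fun j => ¬ p j)).card = ℓ - T := by
    have := Finset.card_filter_add_card_filter_not (s := Finset.univ) (p := p)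
    rw [← hT] at this
    simp only [Finset.card_univ, Fintype.card_fin] at this
    omega
  rw [Finset.sum_sub_distrib, hnotsum, Finset.sum_const, hcard, nsmul_eq_mul]
  have hc : ((ℓ - T : ℕ) : ℝ) = (ℓ : ℝ) - T := by
    push_cast [Nat.cast_sub hTle]; ring
  rw [hc]
  ring
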